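/- Let F be the free group on generators ξ, η. If the reduced word of w ∈ F contains at least one occurrence of the letter η or η⁻¹, then the reduced word of w² contains at least two occurrences of letters from {η, η⁻¹}. -/

import Mathlib

open FreeGroup List

abbrev NC (x y : Bool × Bool) : Prop := ¬(x.1 = y.1 ∧ x.2 = !y.2)

abbrev pe : Bool × Bool → Bool := fun x => x.1 == false

lemma chain'_reduce (L : List (Bool × Bool)) : List.Chain' NC (FreeGroup.reduce L) := by
  induction L with
  | nil => exact List.isChain_nil
  | cons x L ih =>
    rw [FreeGroup.reduce.cons]
    cases h : FreeGroup.reduce L with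
    | nil => exact List.isChain_singleton _
    | cons hd tl =>
      rw [h] at ih
      by_cases hc : x.1 = hd.1 ∧ x.2 = !hd.2
      · simpa [hc, List.Chain'] using ih.tail
      · simp only [if_neg hc]
        exact List.isChain_cons_cons.2 ⟨hc, ih⟩

lemma reduce_eq_self_of_chain' : ∀ {L : List (Bool × Bool)}, List.Chain' NC L →
    FreeGroup.reduce L = L := by
  intro L h
  induction L with
  | nil => rfl
  | cons x L ih =>
    rw [FreeGroup.reduce.cons, ih h.tail]
    cases L with
    | nil => rfl
    | cons hd tl =>
      have : ¬(x.1 = hd.1 ∧ x.2 = !hd.2) := (List.isChain_cons_cons.1 h).1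
      simp [this]

lemma gl_cons_concat (a b : Bool × Bool) (M : List (Bool × Bool)) :
    (a :: (M ++ [b])).getLast? = some b := by
  rw [show a :: (M ++ [b]) = (a :: M) ++ [b] by simp]
  exact List.getLast?_concat

lemma key : ∀ (n : ℕ) (L : List (Bool × Bool)), L.length ≤ n →
    List.Chain' NC L →
    (FreeGroup.reduce (L ++ L)).head? = L.head? ∧
    (FreeGroup.reduce (L ++ L)).getLast? = L.getLast? ∧
    (1 ≤ L.countP pe → 2 ≤ (FreeGroup.reduce (L ++ L)).countP pe) := by
  intro n
  induction n with
  | zero =>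
    intro L hlen _
    have : L = [] := List.eq_nil_of_length_eq_zero (Nat.le_zero.1 hlen)
    subst this; simp
  | succ n ih =>
    intro L hlen hch
    match L with
    | [] => simp
    | [a] =>
      have hred : FreeGroup.reduce [a, a] = [a, a] := by
        apply reduce_eq_self_of_chain'
        refine List.isChain_cons_cons.2 ⟨?_, by simp⟩
        simp [NC]
      constructor
      · simp [hred]
      constructor
      · simp [hred]
      · intro h
        simp only [List.countP_cons, List.countP_nil] at h ⊢
        simp only [List.singleton_append, hred, List.countP_cons, List.countP_nil]
        omega
    | a :: c :: T =>
      obtain ⟨M, b, hMb⟩ : ∃ M b, c :: T = M ++ [b] := by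
        rcases List.eq_nil_or_concat (c :: T) with h | ⟨M, b, h⟩
        · simp at h
        · exact ⟨M, b, by simpa using h⟩
      rw [hMb] at hch hlen ⊢
      by_cases hc : b.1 = a.1 ∧ b.2 = !a.2
      · -- conjugation case: b = a⁻¹
        have hMne : M ≠ [] := by
          rintro rfl
          simp only [List.Chain', List.nil_append, List.isChain_cons_cons, List.isChain_singleton, and_true] at hch
          exact hch ⟨hc.1.symm, by rw [hc.2]; simp⟩
        have hchM : List.Chain' NC M := (hch.tail).prefix ⟨[b], rfl⟩
        have hheadM : ∀ y ∈ M.head?, NC a y := by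
          intro y hy
          have := List.isChain_cons.1 hch |>.1
          apply this
          rwa [List.head?_append_of_ne_nil _ hMne]
        have hlastM : ∀ x ∈ M.getLast?, NC x b := by
          intro x hx
          have h2 := List.isChain_append.1 (hch.tail : List.Chain' NC (M ++ [b]))
          exact h2.2.2 x hx b rfl
        have hMlen : M.length ≤ n := by
          simp only [List.length_cons, List.length_append, List.length_singleton] at hlen
          omega
        obtain ⟨ihh, ihl, ihc⟩ := ih M hMlen hchM
        set R := FreeGroup.reduce (M ++ M) with hR
        have hRne : R ≠ [] := by
          intro h
          rw [h] at ihh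
          simp only [List.head?_nil] at ihh
          exact hMne (List.head?_eq_none_iff.1 ihh.symm)
        have hchain : List.Chain' NC (a :: (R ++ [b])) := by
          refine List.isChain_cons.2 ⟨?_, ?_⟩
          · intro y hy
            rw [List.head?_append_of_ne_nil _ hRne, ihh] at hy
            exact hheadM y hy
          · refine List.isChain_append.2 ⟨chain'_reduce _, List.isChain_singleton _, ?_⟩
            intro x hx y hy
            simp only [List.head?_cons, Option.mem_def, Option.some.injEq] at hy
            subst hy
            rw [Option.mem_def, ihl] at hx
            exact hlastM x hx
        have hmkba : FreeGroup.mk [b] = (FreeGroup.mk [a])⁻¹ := by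
          apply eq_inv_of_mul_eq_one_left
          rw [FreeGroup.mul_mk, ← FreeGroup.toWord_eq_nil_iff, FreeGroup.toWord_mk]
          show FreeGroup.reduce [b, a] = []
          rw [FreeGroup.reduce.cons]
          simp [FreeGroup.reduce_singleton, hc]
        have hmkR : FreeGroup.mk R = FreeGroup.mk M * FreeGroup.mk M := by
          rw [hR, FreeGroup.reduce.self, FreeGroup.mul_mk]
        have hmk : FreeGroup.mk ((a :: (M ++ [b])) ++ (a :: (M ++ [b]))) =
            FreeGroup.mk (a :: (R ++ [b])) := by
          have e1 : (a :: (M ++ [b])) ++ (a :: (M ++ [b])) =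
              [a] ++ (M ++ ([b] ++ ([a] ++ (M ++ [b])))) := by simp
          have e2 : (a :: (R ++ [b])) = [a] ++ (R ++ [b]) := by simp
          rw [e1, e2]
          simp only [← FreeGroup.mul_mk]
          rw [hmkR, hmkba]
          group
        have hredLL : FreeGroup.reduce ((a :: (M ++ [b])) ++ (a :: (M ++ [b]))) =
            a :: (R ++ [b]) := by
          rw [FreeGroup.reduce.sound hmk, reduce_eq_self_of_chain' hchain]
        rw [hredLL]
        refine ⟨by simp, ?_, ?_⟩
        · rw [gl_cons_concat, gl_cons_concat]
        · intro hcount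
          have hpe : pe b = pe a := by simp [pe, hc.1]
          simp only [List.countP_cons, List.countP_append, List.countP_nil,
            List.cons_append, List.nil_append, hpe] at hcount ⊢
          by_cases hpa : pe a = true
          · simp only [hpa, if_true] at hcount ⊢
            omega
          · simp only [Bool.not_eq_true] at hpa
            simp only [hpa, Bool.false_eq_true, if_false] at hcount ⊢
            have := ihc (by omega)
            omega
      · -- cyclically reduced case
        have hLne : (a :: (M ++ [b])) ≠ [] := by simp
        have hchLL : List.Chain' NC ((a :: (M ++ [b])) ++ (a :: (M ++ [b]))) := by
          refine List.isChain_append.2 ⟨hch, hch, ?_⟩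
          intro x hx y hy
          rw [Option.mem_def, gl_cons_concat] at hx
          simp only [List.head?_cons, Option.mem_def, Option.some.injEq] at hy
          cases hx; cases hy
          exact hc
        rw [reduce_eq_self_of_chain' hchLL]
        refine ⟨?_, ?_, ?_⟩
        · rw [List.head?_append_of_ne_nil _ hLne]
        · rw [List.getLast?_append_of_ne_nil _ hLne]
        · intro h
          rw [List.countP_append]
          omega

/-- In the free group on `ξ = of true`, `η = of false`: if the reduced word of `w` contains at
least one occurrence of `η^{±1}`, then the reduced word of `w²` contains at least two. -/
theorem sq_contains_two_eta (w : FreeGroup Bool)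
    (hw : 1 ≤ w.toWord.countP (fun p => p.1 == false)) :
    2 ≤ (w ^ 2).toWord.countP (fun p => p.1 == false) := by
  have hsq : (w ^ 2).toWord = FreeGroup.reduce (w.toWord ++ w.toWord) := by
    rw [pow_two, ← FreeGroup.mk_toWord (x := w), FreeGroup.mul_mk, FreeGroup.toWord_mk,
      FreeGroup.mk_toWord]
  have hch : List.Chain' NC w.toWord := by
    rw [← FreeGroup.reduce_toWord w]
    exact chain'_reduce _
  obtain ⟨-, -, h⟩ := key w.toWord.length w.toWord le_rfl hch
  rw [hsq]
  exact h hw
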